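/- Let a, b, c, d, a', e, f, d' be points appearing in this clockwise order on a circle, where aa' and dd' are diameters. If the distance from d to the line ae is greater than the distance from c to the line ae, then the distance from d to the line bf is greater than the distance from c to the line bf. -/

import Mathlib

open Real

/-- The point of the unit circle at angle `θ`. -/
noncomputable def unitPt (θ : ℝ) : EuclideanSpace ℝ (Fin 2) :=
  (WithLp.equiv 2 (Fin 2 → ℝ)).symm ![Real.cos θ, Real.sin θ]

lemma unitPt_apply_zero (θ : ℝ) : unitPt θ 0 = Real.cos θ := rfl
lemma unitPt_apply_one (θ : ℝ) : unitPt θ 1 = Real.sin θ := rfl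

lemma norm_unitPt (θ : ℝ) : ‖unitPt θ‖ = 1 := by
  rw [EuclideanSpace.norm_eq]
  simp [Fin.sum_univ_two, unitPt_apply_zero, unitPt_apply_one, ← sq_abs, sq_abs,
    Real.sin_sq_add_cos_sq, Real.cos_sq_add_sin_sq]

/-- key vector identity -/
lemma key_identity (m d g : ℝ) (hs : Real.sin d ≠ 0) :
    unitPt (g + m) - unitPt (m - d) - (Real.cos g - Real.cos d) • unitPt m
      = ((Real.sin g + Real.sin d) / (2 * Real.sin d)) • (unitPt (m + d) - unitPt (m - d)) := by
  ext i
  fin_cases i <;>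
    simp [unitPt_apply_zero, unitPt_apply_one, unitPt, Real.cos_add, Real.sin_add,
      Real.cos_sub, Real.sin_sub] <;>
    field_simp <;> ring

lemma inner_unitPt_sub (m d : ℝ) :
    inner ℝ (unitPt (m + d) - unitPt (m - d)) (unitPt m) = (0 : ℝ) := by
  simp [PiLp.inner_apply, Fin.sum_univ_two, unitPt_apply_zero, unitPt_apply_one,
    Real.cos_add, Real.sin_add, Real.cos_sub, Real.sin_sub]
  ring

/-- distance from a point on the circle to a chord -/
lemma chord_infDist (o : EuclideanSpace ℝ (Fin 2)) (ρ : ℝ) (hρ : 0 < ρ) (α β γ : ℝ)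
    (hs : Real.sin ((β - α) / 2) ≠ 0) :
    Metric.infDist (o + ρ • unitPt γ)
        (affineSpan ℝ {o + ρ • unitPt α, o + ρ • unitPt β} : Set (EuclideanSpace ℝ (Fin 2)))
      = ρ * |Real.cos (γ - (α + β) / 2) - Real.cos ((β - α) / 2)| := by
  set m : ℝ := (α + β) / 2 with hm
  set dd : ℝ := (β - α) / 2 with hdd
  set g : ℝ := γ - m with hg
  have hα : α = m - dd := by rw [hm, hdd]; ring
  have hβ : β = m + dd := by rw [hm, hdd]; ring
  have hγ : γ = g + m := by rw [hg]; ring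
  set p := o + ρ • unitPt α with hp
  set q := o + ρ • unitPt β with hq
  set x := o + ρ • unitPt γ with hx
  set n := unitPt m with hn
  set cc : ℝ := ρ * (Real.cos g - Real.cos dd) with hcc
  set r₀ : ℝ := (Real.sin g + Real.sin dd) / (2 * Real.sin dd) with hr₀
  have hkey : x - p - cc • n = r₀ • (q - p) := by
    have := key_identity m dd g hs
    rw [hp, hq, hx, hα, hβ, hγ]
    have h2 : (o + ρ • unitPt (g + m)) - (o + ρ • unitPt (m - dd))
        = ρ • (unitPt (g + m) - unitPt (m - dd)) := by
      rw [smul_sub]; abel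
    have h3 : (o + ρ • unitPt (m + dd)) - (o + ρ • unitPt (m - dd))
        = ρ • (unitPt (m + dd) - unitPt (m - dd)) := by
      rw [smul_sub]; abel
    rw [h2, h3, hcc, mul_smul, ← smul_sub, this, smul_comm]
  have hperp : inner ℝ (q - p) n = (0 : ℝ) := by
    have h3 : q - p = ρ • (unitPt (m + dd) - unitPt (m - dd)) := by
      rw [hp, hq, hα, hβ, smul_sub]; abel
    rw [h3, real_inner_smul_left, inner_unitPt_sub, mul_zero]
  -- every element of the line is p + r • (q - p)
  have hmem : ∀ y, y ∈ (affineSpan ℝ {p, q} : Set (EuclideanSpace ℝ (Fin 2))) ↔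
      ∃ r : ℝ, y = p + r • (q - p) := by
    intro y
    constructor
    · intro hy
      have hy' : (y - p) +ᵥ p ∈ affineSpan ℝ ({p, q} : Set (EuclideanSpace ℝ (Fin 2))) := by
        simpa using hy
      obtain ⟨r, hr⟩ := (vadd_left_mem_affineSpan_pair).mp hy'
      exact ⟨r, by simp only [vsub_eq_sub] at hr; rw [hr]; abel⟩
    · rintro ⟨r, rfl⟩
      have := (vadd_left_mem_affineSpan_pair (k := ℝ) (p₁ := p) (p₂ := q)
        (v := r • (q - p))).mpr ⟨r, by simp⟩
      simpa [add_comm] using this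
  have habs : ‖cc • n‖ = ρ * |Real.cos (γ - (α + β) / 2) - Real.cos ((β - α) / 2)| := by
    rw [norm_smul, hn, norm_unitPt, mul_one, hcc, Real.norm_eq_abs, abs_mul, abs_of_pos hρ, hg, hm, hdd]
  -- distance to any point of the line
  have hdist : ∀ r : ℝ, ‖cc • n‖ ≤ dist x (p + r • (q - p)) := by
    intro r
    have hxp : x - p = cc • n + r₀ • (q - p) := by rw [← hkey]; abel
    have hxy : x - (p + r • (q - p)) = cc • n + (r₀ - r) • (q - p) := by
      have h4 : x - (p + r • (q - p)) = (x - p) - r • (q - p) := by abel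
      rw [h4, hxp, sub_smul]; abel
    rw [dist_eq_norm, hxy]
    have hinner : inner ℝ (cc • n) ((r₀ - r) • (q - p)) = (0 : ℝ) := by
      rw [real_inner_smul_left, real_inner_smul_right, real_inner_comm, hperp]
      ring
    have hsq : ‖cc • n + (r₀ - r) • (q - p)‖ ^ 2
        = ‖cc • n‖ ^ 2 + 2 * inner ℝ (cc • n) ((r₀ - r) • (q - p)) + ‖(r₀ - r) • (q - p)‖ ^ 2 :=
      norm_add_sq_real _ _
    rw [hinner] at hsq
    nlinarith [norm_nonneg (cc • n + (r₀ - r) • (q - p)), norm_nonneg (cc • n),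
      norm_nonneg ((r₀ - r) • (q - p)), sq_nonneg ‖(r₀ - r) • (q - p)‖]
  have hfoot : x - cc • n ∈ (affineSpan ℝ {p, q} : Set (EuclideanSpace ℝ (Fin 2))) := by
    rw [hmem]
    exact ⟨r₀, by rw [← hkey]; abel⟩
  have hub : Metric.infDist x (affineSpan ℝ {p, q} : Set (EuclideanSpace ℝ (Fin 2))) ≤ ‖cc • n‖ := by
    have := Metric.infDist_le_dist_of_mem (x := x) hfoot
    simpa [dist_eq_norm] using this
  have hlb : ‖cc • n‖ ≤ Metric.infDist x (affineSpan ℝ {p, q} : Set (EuclideanSpace ℝ (Fin 2))) := by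
    by_contra h
    push_neg at h
    obtain ⟨y, hy, hylt⟩ := (Metric.infDist_lt_iff ⟨p, by
      simpa using (left_mem_affineSpan_pair ℝ p q)⟩).mp h
    obtain ⟨r, rfl⟩ := (hmem y).mp hy
    exact absurd hylt (not_lt.mpr (hdist r))
  rw [← habs]
  exact le_antisymm hub hlb

lemma cos_lt_cos_of_abs_lt {u v : ℝ} (hu : |u| ≤ π) (h : |v| < |u|) :
    Real.cos u < Real.cos v := by
  rw [← Real.cos_abs u, ← Real.cos_abs v]
  exact Real.cos_lt_cos_of_nonneg_of_le_pi (abs_nonneg v) hu h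

lemma abs_lt_abs_of_cos_lt {u v : ℝ} (hv : |v| ≤ π) (h : Real.cos u < Real.cos v) :
    |v| < |u| := by
  by_contra hle
  push_neg at hle
  have := Real.cos_le_cos_of_nonneg_of_le_pi (abs_nonneg u) hv hle
  rw [Real.cos_abs u, Real.cos_abs v] at this
  linarith

/-- Points `a, b, c, d, a', e, f, d'` in clockwise order on a circle of center `o` and
radius `ρ`, with `a a'` and `d d'` diameters: if `d` is farther than `c` from line `a e`,
then `d` is farther than `c` from line `b f`. -/
theorem stmt_17 (o : EuclideanSpace ℝ (Fin 2)) (ρ : ℝ) (hρ : 0 < ρ)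
    (t₁ t₂ t₃ t₄ t₅ t₆ t₇ t₈ : ℝ)
    (h12 : t₂ < t₁) (h23 : t₃ < t₂) (h34 : t₄ < t₃) (h45 : t₅ < t₄)
    (h56 : t₆ < t₅) (h67 : t₇ < t₆) (h78 : t₈ < t₇) (hwrap : t₁ - t₈ < 2 * π)
    (hdiamA : t₅ = t₁ - π) (hdiamD : t₈ = t₄ - π)
    (a : EuclideanSpace ℝ (Fin 2)) (ha : a = o + ρ • unitPt t₁)
    (b : EuclideanSpace ℝ (Fin 2)) (hb : b = o + ρ • unitPt t₂)
    (c : EuclideanSpace ℝ (Fin 2)) (hc : c = o + ρ • unitPt t₃)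
    (d : EuclideanSpace ℝ (Fin 2)) (hd : d = o + ρ • unitPt t₄)
    (e : EuclideanSpace ℝ (Fin 2)) (he : e = o + ρ • unitPt t₆)
    (f : EuclideanSpace ℝ (Fin 2)) (hf : f = o + ρ • unitPt t₇)
    (hfar : Metric.infDist c (affineSpan ℝ {a, e} : Set (EuclideanSpace ℝ (Fin 2))) <
      Metric.infDist d (affineSpan ℝ {a, e} : Set (EuclideanSpace ℝ (Fin 2)))) :
    Metric.infDist c (affineSpan ℝ {b, f} : Set (EuclideanSpace ℝ (Fin 2))) <
      Metric.infDist d (affineSpan ℝ {b, f} : Set (EuclideanSpace ℝ (Fin 2))) := by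
  subst ha hb hc hd he hf
  have hπ : 0 < π := Real.pi_pos
  have hs₁ : Real.sin ((t₆ - t₁) / 2) ≠ 0 :=
    ne_of_lt (Real.sin_neg_of_neg_of_neg_pi_lt (by linarith) (by linarith))
  have hs₂ : Real.sin ((t₇ - t₂) / 2) ≠ 0 :=
    ne_of_lt (Real.sin_neg_of_neg_of_neg_pi_lt (by linarith) (by linarith))
  rw [chord_infDist o ρ hρ t₁ t₆ t₃ hs₁, chord_infDist o ρ hρ t₁ t₆ t₄ hs₁] at hfar
  rw [chord_infDist o ρ hρ t₂ t₇ t₃ hs₂, chord_infDist o ρ hρ t₂ t₇ t₄ hs₂]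
  set m₁ : ℝ := (t₁ + t₆) / 2 with hm₁
  set m₂ : ℝ := (t₂ + t₇) / 2 with hm₂
  -- positivity of the cos differences for line ae
  have hcos₁ : ∀ γ : ℝ, t₆ < γ → γ < t₁ →
      Real.cos ((t₆ - t₁) / 2) < Real.cos (γ - m₁) := by
    intro γ hγl hγr
    rw [show (t₆ - t₁) / 2 = -((t₁ - t₆) / 2) by ring, Real.cos_neg,
      ← Real.cos_abs (γ - m₁)]
    refine Real.cos_lt_cos_of_nonneg_of_le_pi (abs_nonneg _) (by linarith) ?_
    rw [abs_lt]; constructor <;> [skip; skip] <;> rw [hm₁] <;> linarith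
  have hcos₂ : ∀ γ : ℝ, t₇ < γ → γ < t₂ →
      Real.cos ((t₇ - t₂) / 2) < Real.cos (γ - m₂) := by
    intro γ hγl hγr
    rw [show (t₇ - t₂) / 2 = -((t₂ - t₇) / 2) by ring, Real.cos_neg,
      ← Real.cos_abs (γ - m₂)]
    refine Real.cos_lt_cos_of_nonneg_of_le_pi (abs_nonneg _) (by linarith) ?_
    rw [abs_lt]; constructor <;> [skip; skip] <;> rw [hm₂] <;> linarith
  have h3₁ := hcos₁ t₃ (by linarith) (by linarith)
  have h4₁ := hcos₁ t₄ (by linarith) (by linarith)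
  have h3₂ := hcos₂ t₃ (by linarith) (by linarith)
  have h4₂ := hcos₂ t₄ (by linarith) (by linarith)
  rw [abs_of_pos (by linarith), abs_of_pos (by linarith)] at hfar
  rw [abs_of_pos (by linarith), abs_of_pos (by linarith)]
  -- reduce hypothesis to cosine comparison
  have hcoslt₁ : Real.cos (t₃ - m₁) < Real.cos (t₄ - m₁) := by
    nlinarith
  -- |t₄ - m₁| ≤ π
  have hb₄₁ : |t₄ - m₁| ≤ π := by
    rw [abs_le]; constructor <;> rw [hm₁] <;> linarith
  have habs₁ : |t₄ - m₁| < |t₃ - m₁| := abs_lt_abs_of_cos_lt hb₄₁ hcoslt₁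
  have hsum : t₁ + t₆ < t₃ + t₄ := by
    have hsq : (t₄ - m₁) ^ 2 < (t₃ - m₁) ^ 2 := sq_lt_sq.mpr habs₁
    rw [hm₁] at hsq; nlinarith
  -- now the conclusion
  have habs₂ : |t₄ - m₂| < |t₃ - m₂| := by
    rw [← sq_lt_sq]
    rw [hm₂]; nlinarith
  have hb₃₂ : |t₃ - m₂| ≤ π := by
    rw [abs_le]; constructor <;> rw [hm₂] <;> linarith
  have hcoslt₂ : Real.cos (t₃ - m₂) < Real.cos (t₄ - m₂) :=
    cos_lt_cos_of_abs_lt hb₃₂ habs₂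
  nlinarith
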